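/- Let $g(t) = a_1 e^{\mu t} + a_2 e^{-\alpha t}$ with $a_1, a_2 > 0$ and $\mu < -\alpha < 0$. Suppose a differentiable function $e(t)$ satisfies $e(t^*) = 0$ at some time $t^* \ge 0$ and $\|\dot e(t)\| \le g(t)$ for $t \ge t^*$. If $\bar\tau > 0$ is such that $(a_1 e^{(\mu+\alpha)t^*} + a_2)\,\bar\tau < c'\, e^{-\alpha(t^* + \bar\tau)} e^{\alpha t^*}$, i.e., $(a_1 e^{(\mu+\alpha)t^*} + a_2)\,\bar\tau < c' e^{-\alpha\bar\tau}$, then $\|e(t)\| < c'\, e^{-\alpha t}$ for all $t \in (t^*, t^* + \bar\tau]$. In particular, the threshold condition $\|e(t)\| \ge c' e^{-\alpha t}$ cannot be reached before time $t^* + \bar\tau$. -/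
import Mathlib


/-- Zeno-exclusion bound. If `e(t*) = 0`, `‖ė(t)‖ ≤ g(t) = a₁e^{μt} + a₂e^{-αt}`
for `t ≥ t*`, and `(a₁ e^{(μ+α)t*} + a₂) τ̄ < c' e^{-α τ̄}`, then
`‖e(t)‖ < c' e^{-αt}` on `(t*, t* + τ̄]`, so the threshold cannot be reached before `t* + τ̄`. -/
theorem no_zeno_lower_bound {E : Type*} [NormedAddCommGroup E] [NormedSpace ℝ E]
    (e : ℝ → E) (e' : ℝ → E) (a₁ a₂ μ α c' tstar τ : ℝ)
    (ha₁ : 0 < a₁) (ha₂ : 0 < a₂) (hα : 0 < α) (hμ : μ < -α)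
    (hc' : 0 < c') (htstar : 0 ≤ tstar) (hτ : 0 < τ)
    (hzero : e tstar = 0)
    (hderiv : ∀ t : ℝ, tstar ≤ t → HasDerivAt e (e' t) t)
    (hbound : ∀ t : ℝ, tstar ≤ t →
      ‖e' t‖ ≤ a₁ * Real.exp (μ * t) + a₂ * Real.exp (-α * t))
    (hτbound : (a₁ * Real.exp ((μ + α) * tstar) + a₂) * τ < c' * Real.exp (-α * τ)) :
    ∀ t ∈ Set.Ioc tstar (tstar + τ), ‖e t‖ < c' * Real.exp (-α * t) := by
  intro t ht
  obtain ⟨ht1, ht2⟩ := ht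
  set C := a₁ * Real.exp (μ * tstar) + a₂ * Real.exp (-α * tstar) with hCdef
  have key : ∀ x ∈ Set.Icc tstar t, ‖e x - e tstar‖ ≤ C * (x - tstar) := by
    refine norm_image_sub_le_of_norm_deriv_le_segment'
      (fun x hx => (hderiv x hx.1).hasDerivWithinAt) (fun x hx => ?_)
    refine (hbound x hx.1).trans ?_
    have h1 : μ * x ≤ μ * tstar := by nlinarith [hx.1]
    have h2 : -α * x ≤ -α * tstar := by nlinarith [hx.1]
    exact add_le_add (mul_le_mul_of_nonneg_left (Real.exp_le_exp.2 h1) ha₁.le)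
      (mul_le_mul_of_nonneg_left (Real.exp_le_exp.2 h2) ha₂.le)
  have hkey := key t ⟨le_of_lt ht1, le_refl t⟩
  rw [hzero, sub_zero] at hkey
  have hCpos : 0 < C := by positivity
  have hCeq : C = (a₁ * Real.exp ((μ + α) * tstar) + a₂) * Real.exp (-α * tstar) := by
    rw [hCdef, add_mul, mul_assoc, ← Real.exp_add]
    ring_nf
  have hexppos : (0:ℝ) < Real.exp (-α * tstar) := Real.exp_pos _
  have h3 : C * (t - tstar) ≤ C * τ := by nlinarith
  have h4 : C * τ < c' * Real.exp (-α * τ) * Real.exp (-α * tstar) := by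
    rw [hCeq]; nlinarith
  have h5 : c' * Real.exp (-α * τ) * Real.exp (-α * tstar) ≤ c' * Real.exp (-α * t) := by
    rw [mul_assoc, ← Real.exp_add]
    have : -α * τ + -α * tstar ≤ -α * t := by nlinarith
    exact mul_le_mul_of_nonneg_left (Real.exp_le_exp.2 this) hc'.le
  calc ‖e t‖ ≤ C * (t - tstar) := hkey
    _ ≤ C * τ := h3
    _ < _ := lt_of_lt_of_le h4 h5
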